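/- arXiv:0910.5500 — 4 statements merged into one kernel-verified Lean document; each statement's English description precedes it below -/
import Mathlib

section
/- Let X be a finite metric space. If w : X → ℝ and v : X → ℝ are both weightings on X, then the total weights agree: ∑_{x∈X} w(x) = ∑_{x∈X} v(x). In particular, the magnitude of a finite metric space is independent of the choice of weighting. -/
/-- If `w` and `v` are both weightings on a finite metric space `X`
(i.e. they satisfy the weight equation at every point), then their total
weights agree; hence the magnitude is independent of the weighting. -/
theorem magnitude_independent_of_weighting
    {X : Type*} [MetricSpace X] [Fintype X]
    (w v : X → ℝ)
    (hw : ∀ x' : X, ∑ x : X, Real.exp (-dist x x') * w x = 1)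
    (hv : ∀ x' : X, ∑ x : X, Real.exp (-dist x x') * v x = 1) :
    ∑ x : X, w x = ∑ x : X, v x := by
  calc ∑ x : X, w x = ∑ x : X, w x * ∑ y : X, Real.exp (-dist y x) * v y := by
        simp [hv]
    _ = ∑ x : X, ∑ y : X, w x * (Real.exp (-dist y x) * v y) := by
        simp [Finset.mul_sum]
    _ = ∑ y : X, ∑ x : X, w x * (Real.exp (-dist y x) * v y) := Finset.sum_comm
    _ = ∑ y : X, v y * ∑ x : X, Real.exp (-dist x y) * w x := by
        simp [Finset.mul_sum, dist_comm]; congr 1; ext y; congr 1; ext x; ring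
    _ = ∑ y : X, v y := by simp [hw]
end

section
/- Let X be a finite homogeneous metric space, i.e. for every pair of points x, y ∈ X there is a bijective isometry σ : X → X with σ(x) = y. Fix any point x₀ ∈ X and set S = ∑_{y∈X} e^{−d(x₀,y)} (this quantity is independent of the choice of x₀). Then the constant function w ≡ 1/S is a weighting on X, and the magnitude of X equals |X| = N/S, where N is the number of points of X. -/
/-- For a finite homogeneous metric space `X`, the constant function
`w ≡ 1/S`, where `S = ∑ y, e^{-d(x₀,y)}` for any fixed point `x₀`,
is a weighting on `X`, and the magnitude of `X` is `N/S` where `N` is the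
number of points. -/
theorem magnitude_of_homogeneous
    {X : Type*} [MetricSpace X] [Fintype X]
    (hhom : ∀ x y : X, ∃ σ : X ≃ᵢ X, σ x = y)
    (x₀ : X) (S : ℝ) (hS : S = ∑ y : X, Real.exp (-dist x₀ y)) :
    (∀ x' : X, ∑ x : X, Real.exp (-dist x x') * (1 / S) = 1) ∧
    (∑ _x : X, (1 / S) = (Fintype.card X : ℝ) / S) := by
  have hSpos : 0 < S := by
    rw [hS]
    exact Finset.sum_pos (fun i _ => Real.exp_pos _) ⟨x₀, Finset.mem_univ x₀⟩
  constructor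
  · intro x'
    obtain ⟨σ, hσ⟩ := hhom x₀ x'
    have hsum : ∑ x : X, Real.exp (-dist x x') = S := by
      rw [hS]
      rw [← Equiv.sum_comp σ.toEquiv (fun x => Real.exp (-dist x x'))]
      apply Finset.sum_congr rfl
      intro y _
      simp only [IsometryEquiv.coe_toEquiv]
      rw [← hσ, σ.dist_eq, dist_comm]
    rw [← Finset.sum_mul, hsum, mul_one_div, div_self hSpos.ne']
  · rw [Finset.sum_const, Finset.card_univ, nsmul_eq_mul, mul_one_div]
end

section
/- For every integer n ≥ 1, the scaled lattice sums of e^{−‖x‖} converge to the integral: as ε → 0⁺, εⁿ · ∑_{x∈ℤⁿ} e^{−ε‖x‖} → n! · ωₙ, where ωₙ is the Lebesgue volume of the unit ball in ℝⁿ. (In particular, for each ε > 0 the sum ∑_{x∈ℤⁿ} e^{−ε‖x‖} converges.) -/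
open MeasureTheory Filter

/-- The point of Euclidean space `ℝⁿ` corresponding to a point of the
integer lattice `ℤⁿ`. -/
noncomputable def latticePoint (n : ℕ) (x : Fin n → ℤ) : EuclideanSpace ℝ (Fin n) :=
  (WithLp.equiv 2 (Fin n → ℝ)).symm fun i => (x i : ℝ)

/-- The unit cube of the lattice point `v`. -/
def latCube (n : ℕ) (v : Fin n → ℤ) : Set (EuclideanSpace ℝ (Fin n)) :=
  (MeasurableEquiv.toLp 2 (Fin n → ℝ)).symm ⁻¹'
    (Set.univ.pi fun i => Set.Ico (v i : ℝ) ((v i : ℝ) + 1))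

lemma mem_latCube {n : ℕ} {v : Fin n → ℤ} {y : EuclideanSpace ℝ (Fin n)} :
    y ∈ latCube n v ↔ ∀ i, (v i : ℝ) ≤ y i ∧ y i < (v i : ℝ) + 1 := by
  simp [latCube, Set.mem_pi]

lemma measurableSet_latCube {n : ℕ} (v : Fin n → ℤ) : MeasurableSet (latCube n v) :=
  (MeasurableEquiv.toLp 2 (Fin n → ℝ)).symm.measurable
    (MeasurableSet.univ_pi fun _ => measurableSet_Ico)

lemma volume_latCube {n : ℕ} (v : Fin n → ℤ) : volume (latCube n v) = 1 := by
  rw [latCube, (EuclideanSpace.volume_preserving_symm_measurableEquiv_toLp (Fin n)).measure_preimage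
    ((MeasurableSet.univ_pi fun _ => measurableSet_Ico).nullMeasurableSet)]
  simp [volume_pi_pi, Real.volume_Ico]

lemma disjoint_latCube {n : ℕ} : Pairwise (Function.onFun Disjoint (latCube n)) := by
  intro v w hvw
  rw [Function.onFun, Set.disjoint_left]
  intro y hy hy'
  rw [mem_latCube] at hy hy'
  refine hvw (funext fun i => ?_)
  have h1 := hy i; have h2 := hy' i
  have e1 : ⌊(y i : ℝ)⌋ = v i := Int.floor_eq_iff.mpr ⟨h1.1, by push_cast; exact h1.2⟩
  have e2 : ⌊(y i : ℝ)⌋ = w i := Int.floor_eq_iff.mpr ⟨h2.1, by push_cast; exact h2.2⟩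
  rw [← e1, ← e2]

lemma iUnion_latCube {n : ℕ} : ⋃ v, latCube n v = Set.univ := by
  ext y
  simp only [Set.mem_iUnion, Set.mem_univ, iff_true]
  refine ⟨fun i => ⌊(y i : ℝ)⌋, mem_latCube.mpr fun i => ⟨Int.floor_le _, by
    push_cast; exact Int.lt_floor_add_one _⟩⟩

lemma norm_sub_latticePoint {n : ℕ} {v : Fin n → ℤ} {y : EuclideanSpace ℝ (Fin n)}
    (hy : y ∈ latCube n v) : ‖y - latticePoint n v‖ ≤ Real.sqrt n := by
  rw [EuclideanSpace.norm_eq]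
  refine Real.sqrt_le_sqrt ?_
  have : ∀ i, ‖(y - latticePoint n v) i‖ ^ 2 ≤ 1 := by
    intro i
    have h := mem_latCube.mp hy i
    have : |y i - (v i : ℝ)| ≤ 1 := by
      rw [abs_le]; constructor <;> [linarith [h.1]; linarith [h.2]]
    calc ‖(y - latticePoint n v) i‖ ^ 2 = |y i - (v i : ℝ)| ^ 2 := by
          have : (y - latticePoint n v) i = y i - (v i : ℝ) := rfl
          rw [this, Real.norm_eq_abs, sq_abs]
      _ ≤ 1 ^ 2 := by nlinarith [abs_nonneg (y i - (v i : ℝ))]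
      _ = 1 := one_pow 2
  calc ∑ i, ‖(y - latticePoint n v) i‖ ^ 2 ≤ ∑ _i : Fin n, (1:ℝ) :=
        Finset.sum_le_sum fun i _ => this i
    _ = n := by simp

lemma pow_div_factorial_le_exp' {x : ℝ} (hx : 0 ≤ x) (k : ℕ) :
    x ^ k / (k.factorial : ℝ) ≤ Real.exp x := by
  calc x ^ k / (k.factorial : ℝ) ≤ ∑ i ∈ Finset.range (k + 1), x ^ i / (i.factorial : ℝ) :=
        Finset.single_le_sum (f := fun i => x ^ i / (i.factorial : ℝ))
          (fun i _ => by positivity) (Finset.self_mem_range_succ k)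
    _ ≤ Real.exp x := Real.sum_le_exp_of_nonneg hx _

lemma nontrivial_euclidean {n : ℕ} (hn : 1 ≤ n) :
    Nontrivial (EuclideanSpace ℝ (Fin n)) := by
  haveI : NeZero n := ⟨by omega⟩
  infer_instance

lemma integrable_exp_neg_mul_norm {n : ℕ} (hn : 1 ≤ n) {ε : ℝ} (hε : 0 < ε) :
    Integrable (fun y : EuclideanSpace ℝ (Fin n) => Real.exp (-(ε * ‖y‖))) := by
  haveI := nontrivial_euclidean hn
  have hfin : (Module.finrank ℝ (EuclideanSpace ℝ (Fin n)) : ℝ) < ((n : ℝ) + 1) := by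
    simp [finrank_euclideanSpace_fin]
  set C : ℝ := (n + 1).factorial * Real.exp ε / ε ^ (n + 1) with hC
  refine ((integrable_one_add_norm (E := EuclideanSpace ℝ (Fin n)) (μ := volume)
    (r := (n : ℝ) + 1) hfin).const_mul C).mono' ?_ (Filter.Eventually.of_forall fun y => ?_)
  · exact (Real.continuous_exp.comp
      (continuous_const.mul continuous_norm).neg).aestronglyMeasurable
  · set t : ℝ := ‖y‖ with ht
    have ht0 : 0 ≤ t := norm_nonneg _
    have h1t : (0:ℝ) < 1 + t := by linarith
    have hrpow : (1 + t) ^ (-((n : ℝ) + 1)) = ((1 + t) ^ (n + 1))⁻¹ := by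
      rw [Real.rpow_neg h1t.le, ← Real.rpow_natCast (1 + t) (n + 1)]
      push_cast
      ring_nf
    have key : (ε * (1 + t)) ^ (n + 1) / ((n + 1).factorial : ℝ) ≤ Real.exp (ε * (1 + t)) :=
      pow_div_factorial_le_exp' (by positivity) _
    have key2 : (1 + t) ^ (n + 1) ≤
        ((n + 1).factorial : ℝ) * (Real.exp ε * Real.exp (ε * t)) / ε ^ (n + 1) := by
      rw [le_div_iff₀ (by positivity), ← Real.exp_add ε (ε * t)]
      have h := (div_le_iff₀ (by positivity : (0:ℝ) < ((n+1).factorial : ℝ))).mp key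
      have hee : ε + ε * t = ε * (1 + t) := by ring
      rw [hee]
      calc (1 + t) ^ (n + 1) * ε ^ (n + 1) = (ε * (1 + t)) ^ (n + 1) := by
            rw [mul_pow]; ring
        _ ≤ Real.exp (ε * (1 + t)) * ((n + 1).factorial : ℝ) := h
        _ = ((n + 1).factorial : ℝ) * Real.exp (ε * (1 + t)) := by ring
    have h3 : Real.exp (-(ε * t)) * (1 + t) ^ (n + 1) ≤ C := by
      rw [hC]
      calc Real.exp (-(ε * t)) * (1 + t) ^ (n + 1)
          ≤ Real.exp (-(ε * t)) *
            (((n + 1).factorial : ℝ) * (Real.exp ε * Real.exp (ε * t)) / ε ^ (n + 1)) := by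
            gcongr
        _ = ((n + 1).factorial : ℝ) * Real.exp ε / ε ^ (n + 1) *
            (Real.exp (-(ε * t)) * Real.exp (ε * t)) := by ring
        _ = ((n + 1).factorial : ℝ) * Real.exp ε / ε ^ (n + 1) := by
            rw [← Real.exp_add]; simp
    rw [Real.norm_eq_abs, abs_of_pos (Real.exp_pos _), hrpow]
    calc Real.exp (-(ε * t))
        = Real.exp (-(ε * t)) * (1 + t) ^ (n + 1) * ((1 + t) ^ (n + 1))⁻¹ := by
          field_simp
      _ ≤ C * ((1 + t) ^ (n + 1))⁻¹ := by gcongr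

lemma integral_exp_neg_mul_norm {n : ℕ} (hn : 1 ≤ n) {ε : ℝ} (hε : 0 < ε) :
    ∫ y : EuclideanSpace ℝ (Fin n), Real.exp (-(ε * ‖y‖)) =
      (1 / ε) ^ n * ((n.factorial : ℝ) *
        (volume (Metric.closedBall (0 : EuclideanSpace ℝ (Fin n)) 1)).toReal) := by
  haveI := nontrivial_euclidean hn
  rw [MeasureTheory.integral_fun_norm_addHaar (volume : Measure (EuclideanSpace ℝ (Fin n)))
    (fun r => Real.exp (-(ε * r)))]
  rw [Measure.addHaar_closedBall_eq_addHaar_ball]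
  have hdim : Module.finrank ℝ (EuclideanSpace ℝ (Fin n)) = n := finrank_euclideanSpace_fin
  rw [hdim]
  have hcast : ((n - 1 : ℕ) : ℝ) + 1 = (n : ℝ) := by
    have h := Nat.cast_sub hn (R := ℝ); push_cast at h ⊢; linarith
  have hint : ∫ y in Set.Ioi (0:ℝ), y ^ (n - 1) • Real.exp (-(ε * y)) =
      (1 / ε) ^ n * ((n - 1).factorial : ℝ) := by
    have h1 := Real.integral_rpow_mul_exp_neg_mul_Ioi
      (by positivity : (0:ℝ) < (n:ℝ)) hε
    have h2 : ∫ y in Set.Ioi (0:ℝ), y ^ (n - 1) • Real.exp (-(ε * y)) =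
        ∫ t in Set.Ioi (0:ℝ), t ^ ((n:ℝ) - 1) * Real.exp (-(ε * t)) := by
      refine setIntegral_congr_fun measurableSet_Ioi fun t ht => ?_
      rw [smul_eq_mul]
      congr 1
      rw [← Real.rpow_natCast t (n - 1)]
      congr 1
      push_cast [Nat.cast_sub hn]
      ring
    rw [h2, h1, ← Real.Gamma_nat_eq_factorial (n - 1), hcast,
      ← Real.rpow_natCast (1/ε) n]
  rw [hint]
  have hfact : (n : ℝ) * ((n - 1).factorial : ℝ) = (n.factorial : ℝ) := by
    rw [← Nat.cast_mul, Nat.mul_factorial_pred (by omega)]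
  rw [nsmul_eq_mul, smul_eq_mul, ← hfact, measureReal_def]
  ring

lemma latCube_bounds {n : ℕ} (hn : 1 ≤ n) {ε : ℝ} (hε : 0 < ε) :
    Summable (fun v : Fin n → ℤ => Real.exp (-(ε * ‖latticePoint n v‖))) ∧
    Real.exp (-(ε * Real.sqrt n)) * ((n.factorial : ℝ) *
        (volume (Metric.closedBall (0 : EuclideanSpace ℝ (Fin n)) 1)).toReal) ≤
      ε ^ n * ∑' v : Fin n → ℤ, Real.exp (-(ε * ‖latticePoint n v‖)) ∧
    ε ^ n * ∑' v : Fin n → ℤ, Real.exp (-(ε * ‖latticePoint n v‖)) ≤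
      Real.exp (ε * Real.sqrt n) * ((n.factorial : ℝ) *
        (volume (Metric.closedBall (0 : EuclideanSpace ℝ (Fin n)) 1)).toReal) := by
  set I : ℝ := (n.factorial : ℝ) *
    (volume (Metric.closedBall (0 : EuclideanSpace ℝ (Fin n)) 1)).toReal with hIdef
  set f : EuclideanSpace ℝ (Fin n) → ℝ := fun y => Real.exp (-(ε * ‖y‖)) with hfdef
  have hf : Integrable f := integrable_exp_neg_mul_norm hn hε
  have hIval : ∫ y, f y = (1 / ε) ^ n * I := integral_exp_neg_mul_norm hn hε
  set g : (Fin n → ℤ) → ℝ := fun v => ∫ y in latCube n v, f y with hgdef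
  have hHasSum : HasSum g (∫ y, f y) := by
    have h := hasSum_integral_iUnion (μ := volume) (f := f)
      (fun v => measurableSet_latCube v) disjoint_latCube
      (by rw [iUnion_latCube]; exact hf.integrableOn)
    rwa [iUnion_latCube, Measure.restrict_univ] at h
  have hvol : ∀ v : Fin n → ℤ, (volume (latCube n v)).toReal = 1 := by
    intro v; rw [volume_latCube]; simp
  have hfin : ∀ v : Fin n → ℤ, volume (latCube n v) ≠ ⊤ := by
    intro v; rw [volume_latCube]; simp
  -- pointwise norm bounds
  have hptUB : ∀ (v : Fin n → ℤ) (y : EuclideanSpace ℝ (Fin n)), y ∈ latCube n v →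
      Real.exp (-(ε * ‖latticePoint n v‖)) ≤ Real.exp (ε * Real.sqrt n) * f y := by
    intro v y hy
    rw [hfdef, ← Real.exp_add]
    apply Real.exp_le_exp.mpr
    have h1 : ‖y‖ ≤ ‖latticePoint n v‖ + Real.sqrt n := by
      calc ‖y‖ = ‖latticePoint n v + (y - latticePoint n v)‖ := by rw [add_sub_cancel]
        _ ≤ ‖latticePoint n v‖ + ‖y - latticePoint n v‖ := norm_add_le _ _
        _ ≤ ‖latticePoint n v‖ + Real.sqrt n := by
            linarith [norm_sub_latticePoint hy]
    nlinarith
  have hptLB : ∀ (v : Fin n → ℤ) (y : EuclideanSpace ℝ (Fin n)), y ∈ latCube n v →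
      Real.exp (-(ε * Real.sqrt n)) * f y ≤ Real.exp (-(ε * ‖latticePoint n v‖)) := by
    intro v y hy
    rw [hfdef, ← Real.exp_add]
    apply Real.exp_le_exp.mpr
    have h1 : ‖latticePoint n v‖ ≤ ‖y‖ + Real.sqrt n := by
      calc ‖latticePoint n v‖ = ‖y - (y - latticePoint n v)‖ := by rw [sub_sub_cancel]
        _ ≤ ‖y‖ + ‖y - latticePoint n v‖ := norm_sub_le _ _
        _ ≤ ‖y‖ + Real.sqrt n := by linarith [norm_sub_latticePoint hy]
    nlinarith
  -- integrated bounds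
  have hUB : ∀ v : Fin n → ℤ,
      Real.exp (-(ε * ‖latticePoint n v‖)) ≤ Real.exp (ε * Real.sqrt n) * g v := by
    intro v
    have hconst : ∫ _y in latCube n v, Real.exp (-(ε * ‖latticePoint n v‖)) =
        Real.exp (-(ε * ‖latticePoint n v‖)) := by
      rw [setIntegral_const, measureReal_def, hvol v, one_smul]
    calc Real.exp (-(ε * ‖latticePoint n v‖))
        = ∫ _y in latCube n v, Real.exp (-(ε * ‖latticePoint n v‖)) := hconst.symm
      _ ≤ ∫ y in latCube n v, Real.exp (ε * Real.sqrt n) * f y := by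
          refine setIntegral_mono_on ((integrableOn_const_iff).mpr (Or.inr ?_))
            ((hf.integrableOn).const_mul _) (measurableSet_latCube v)
            (fun y hy => hptUB v y hy)
          exact (volume_latCube v).symm ▸ ENNReal.one_lt_top
      _ = Real.exp (ε * Real.sqrt n) * g v := by rw [hgdef, integral_const_mul]
  have hLB : ∀ v : Fin n → ℤ,
      Real.exp (-(ε * Real.sqrt n)) * g v ≤ Real.exp (-(ε * ‖latticePoint n v‖)) := by
    intro v
    have hconst : ∫ _y in latCube n v, Real.exp (-(ε * ‖latticePoint n v‖)) =
        Real.exp (-(ε * ‖latticePoint n v‖)) := by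
      rw [setIntegral_const, measureReal_def, hvol v, one_smul]
    calc Real.exp (-(ε * Real.sqrt n)) * g v
        = ∫ y in latCube n v, Real.exp (-(ε * Real.sqrt n)) * f y := by
          rw [hgdef, integral_const_mul]
      _ ≤ ∫ _y in latCube n v, Real.exp (-(ε * ‖latticePoint n v‖)) := by
          refine setIntegral_mono_on ((hf.integrableOn).const_mul _)
            ((integrableOn_const_iff).mpr (Or.inr ?_)) (measurableSet_latCube v)
            (fun y hy => hptLB v y hy)
          exact (volume_latCube v).symm ▸ ENNReal.one_lt_top
      _ = Real.exp (-(ε * ‖latticePoint n v‖)) := hconst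
  have hgsum : Summable g := hHasSum.summable
  have hsum : Summable (fun v : Fin n → ℤ => Real.exp (-(ε * ‖latticePoint n v‖))) :=
    Summable.of_nonneg_of_le (fun v => (Real.exp_pos _).le) hUB (hgsum.mul_left _)
  refine ⟨hsum, ?_, ?_⟩
  · have h1 : Real.exp (-(ε * Real.sqrt n)) * ∫ y, f y ≤
        ∑' v : Fin n → ℤ, Real.exp (-(ε * ‖latticePoint n v‖)) := by
      calc Real.exp (-(ε * Real.sqrt n)) * ∫ y, f y
          = ∑' v, Real.exp (-(ε * Real.sqrt n)) * g v := by
            rw [tsum_mul_left, hHasSum.tsum_eq]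
        _ ≤ ∑' v : Fin n → ℤ, Real.exp (-(ε * ‖latticePoint n v‖)) :=
            Summable.tsum_le_tsum hLB (hgsum.mul_left _) hsum
    have h2 := mul_le_mul_of_nonneg_left h1 (pow_nonneg hε.le n)
    calc Real.exp (-(ε * Real.sqrt n)) * I
        = ε ^ n * (Real.exp (-(ε * Real.sqrt n)) * ((1 / ε) ^ n * I)) := by
          field_simp
          rw [mul_assoc, ← mul_pow, mul_one_div_cancel hε.ne', one_pow, mul_one]
      _ = ε ^ n * (Real.exp (-(ε * Real.sqrt n)) * ∫ y, f y) := by rw [hIval]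
      _ ≤ ε ^ n * ∑' v : Fin n → ℤ, Real.exp (-(ε * ‖latticePoint n v‖)) := h2
  · have h1 : ∑' v : Fin n → ℤ, Real.exp (-(ε * ‖latticePoint n v‖)) ≤
        Real.exp (ε * Real.sqrt n) * ∫ y, f y := by
      calc ∑' v : Fin n → ℤ, Real.exp (-(ε * ‖latticePoint n v‖))
          ≤ ∑' v, Real.exp (ε * Real.sqrt n) * g v :=
            Summable.tsum_le_tsum hUB hsum (hgsum.mul_left _)
        _ = Real.exp (ε * Real.sqrt n) * ∫ y, f y := by
            rw [tsum_mul_left, hHasSum.tsum_eq]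
    have h2 := mul_le_mul_of_nonneg_left h1 (pow_nonneg hε.le n)
    calc ε ^ n * ∑' v : Fin n → ℤ, Real.exp (-(ε * ‖latticePoint n v‖))
        ≤ ε ^ n * (Real.exp (ε * Real.sqrt n) * ∫ y, f y) := h2
      _ = ε ^ n * (Real.exp (ε * Real.sqrt n) * ((1 / ε) ^ n * I)) := by rw [hIval]
      _ = Real.exp (ε * Real.sqrt n) * I := by field_simp; rw [← mul_pow, mul_one_div_cancel hε.ne', one_pow, one_mul]

/-- For each `ε > 0` the lattice sum `∑_{x ∈ ℤⁿ} e^{-ε‖x‖}` converges, and the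
scaled sums converge to the integral: `εⁿ · ∑_{x ∈ ℤⁿ} e^{-ε‖x‖} → n! · ωₙ`
as `ε → 0⁺`, where `ωₙ` is the Lebesgue volume of the unit ball in `ℝⁿ`. -/
theorem scaled_lattice_sum_tendsto (n : ℕ) (hn : 1 ≤ n) :
    (∀ ε : ℝ, 0 < ε → Summable (fun x : Fin n → ℤ =>
      Real.exp (-(ε * ‖latticePoint n x‖)))) ∧
    Tendsto
      (fun ε : ℝ => ε ^ n * ∑' x : Fin n → ℤ,
        Real.exp (-(ε * ‖latticePoint n x‖)))
      (nhdsWithin 0 (Set.Ioi 0))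
      (nhds ((Nat.factorial n : ℝ) *
        (volume (Metric.closedBall (0 : EuclideanSpace ℝ (Fin n)) 1)).toReal)) := by
  set I : ℝ := (n.factorial : ℝ) *
    (volume (Metric.closedBall (0 : EuclideanSpace ℝ (Fin n)) 1)).toReal with hIdef
  refine ⟨fun ε hε => (latCube_bounds hn hε).1, ?_⟩
  have hlo : Tendsto (fun ε : ℝ => Real.exp (-(ε * Real.sqrt n)) * I)
      (nhdsWithin 0 (Set.Ioi 0)) (nhds I) := by
    have hc : Continuous fun ε : ℝ => Real.exp (-(ε * Real.sqrt n)) * I := by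
      fun_prop
    have := (hc.tendsto 0).mono_left (nhdsWithin_le_nhds (s := Set.Ioi 0))
    simpa using this
  have hhi : Tendsto (fun ε : ℝ => Real.exp (ε * Real.sqrt n) * I)
      (nhdsWithin 0 (Set.Ioi 0)) (nhds I) := by
    have hc : Continuous fun ε : ℝ => Real.exp (ε * Real.sqrt n) * I := by
      fun_prop
    have := (hc.tendsto 0).mono_left (nhdsWithin_le_nhds (s := Set.Ioi 0))
    simpa using this
  refine tendsto_of_tendsto_of_tendsto_of_le_of_le' hlo hhi ?_ ?_
  · filter_upwards [self_mem_nhdsWithin] with ε hε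
    exact (latCube_bounds hn hε).2.1
  · filter_upwards [self_mem_nhdsWithin] with ε hε
    exact (latCube_bounds hn hε).2.2
end

section
/- Let X be a finite metric space with N points and, for t > 0, let tX denote X with the metric scaled by the factor t. Then there exists t₀ > 0 such that for all t ≥ t₀ the matrix Z_t with entries (Z_t)_{xy} = e^{−t·d(x,y)} is invertible (so tX has a magnitude |tX| equal to the sum of the entries of Z_t^{−1}), and |tX| → N as t → ∞. -/
open Matrix Filter

theorem tendstoZ_one
    {X : Type*} [MetricSpace X] [Fintype X] [DecidableEq X]
    (Z : ℝ → Matrix X X ℝ)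
    (hZ : ∀ (t : ℝ) (x y : X), Z t x y = Real.exp (-(t * dist x y))) :
    Tendsto Z atTop (nhds (1 : Matrix X X ℝ)) := by
  refine tendsto_pi_nhds.2 ?_
  intro x
  rw [tendsto_pi_nhds]
  intro y
  simp only [hZ]
  rcases eq_or_ne x y with rfl | hxy
  · simp
  · have hd : 0 < dist x y := dist_pos.mpr hxy
    have h1 : Tendsto (fun t : ℝ => t * dist x y) atTop atTop :=
      Tendsto.atTop_mul_const hd tendsto_id
    have h2 : Tendsto (fun t : ℝ => Real.exp (-(t * dist x y))) atTop (nhds 0) :=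
      (Real.tendsto_exp_neg_atTop_nhds_zero).comp h1
    simpa [Matrix.one_apply, hxy] using h2

/-- For a finite metric space `X` with `N` points and `Z_t` the matrix of
exponentiated distances of the scaled space `tX`, there is `t₀ > 0` such that
for all `t ≥ t₀` the matrix `Z_t` is invertible (so `tX` has a weighting
`Z_t⁻¹ · 𝟙` and a magnitude equal to the sum of all entries of `Z_t⁻¹`), and
this magnitude tends to `N` as `t → ∞`. -/
theorem magnitude_tendsto_card
    {X : Type*} [MetricSpace X] [Fintype X] [DecidableEq X]
    (Z : ℝ → Matrix X X ℝ)
    (hZ : ∀ (t : ℝ) (x y : X), Z t x y = Real.exp (-(t * dist x y))) :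
    ∃ t₀ : ℝ, 0 < t₀ ∧
      (∀ t : ℝ, t₀ ≤ t → IsUnit (Z t)) ∧
      (∀ t : ℝ, t₀ ≤ t → ∀ x' : X,
        ∑ x : X, Real.exp (-(t * dist x x')) * ((Z t)⁻¹.mulVec 1) x = 1) ∧
      Tendsto (fun t : ℝ => ∑ x : X, ∑ y : X, (Z t)⁻¹ x y) atTop
        (nhds (Fintype.card X : ℝ)) := by
  have h1 := tendstoZ_one Z hZ
  have hdet : Tendsto (fun t => (Z t).det) atTop (nhds 1) := by
    have : Tendsto (fun t => (Z t).det) atTop (nhds ((1 : Matrix X X ℝ).det)) :=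
      (continuous_id.matrix_det.tendsto _).comp h1
    simpa using this
  have hne : ∀ᶠ t in atTop, (Z t).det ≠ 0 := hdet.eventually_ne one_ne_zero
  obtain ⟨t₁, ht₁⟩ := eventually_atTop.mp hne
  refine ⟨max t₁ 1, lt_of_lt_of_le one_pos (le_max_right _ _), ?_, ?_, ?_⟩
  · intro t ht
    have : (Z t).det ≠ 0 := ht₁ t (le_trans (le_max_left _ _) ht)
    exact (Matrix.isUnit_iff_isUnit_det _).mpr (isUnit_iff_ne_zero.mpr this)
  · intro t ht x'
    have hd : (Z t).det ≠ 0 := ht₁ t (le_trans (le_max_left _ _) ht)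
    have hmul : Z t * (Z t)⁻¹ = 1 := Matrix.mul_nonsing_inv _ (isUnit_iff_ne_zero.mpr hd)
    have : ∑ x : X, Real.exp (-(t * dist x x')) * ((Z t)⁻¹.mulVec 1) x
        = ((Z t).mulVec ((Z t)⁻¹.mulVec 1)) x' := by
      rw [Matrix.mulVec]
      simp only [dotProduct, hZ]
      refine Finset.sum_congr rfl fun x _ => ?_
      rw [dist_comm]
    rw [this, Matrix.mulVec_mulVec, hmul, Matrix.one_mulVec]
    rfl
  · have hinvc : ContinuousAt Inv.inv (1 : Matrix X X ℝ) := by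
      apply continuousAt_matrix_inv
      have : (1 : Matrix X X ℝ).det = 1 := Matrix.det_one
      rw [this]
      exact NormedRing.inverse_continuousAt 1
    have hinv : Tendsto (fun t => (Z t)⁻¹) atTop (nhds (1 : Matrix X X ℝ)) := by
      have := (hinvc.tendsto).comp h1
      rw [inv_one] at this
      exact this
    have hsum : Continuous (fun A : Matrix X X ℝ => ∑ x : X, ∑ y : X, A x y) := by
      refine continuous_finset_sum _ fun x _ => continuous_finset_sum _ fun y _ => ?_
      exact (continuous_apply y).comp (continuous_apply x)
    have := (hsum.tendsto _).comp hinv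
    change Tendsto (fun t => ∑ x : X, ∑ y : X, (Z t)⁻¹ x y) atTop _ at this
    convert this using 2
    simp [Matrix.one_apply]
end
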